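/- Let a : ℝ → [0,∞) satisfy C₁|s|^p − C₂ ≤ a(s) for all s with p > 1, C₁, C₂ > 0, and let f₁, f₂ ∈ C¹([0,T]). Define E(t,x) := a(x₁ − f₁(t)) + a(f₂(t) − x_d) + Σ_{i=1}^{d−1} a(x_{i+1} − x_i). Then there exist constants C₃, C₄ > 0 such that C₃|x|^p − C₄ ≤ E(t,x) for all (t,x) ∈ [0,T] × ℝ^d, where |x| is the Euclidean norm on ℝ^d. -/
import Mathlib

open Set

section Helpers
open Finset

open Set Finset

private lemma two_term (p : ℝ) (hp : 1 ≤ p) {a b : ℝ} (ha : 0 ≤ a) (hb : 0 ≤ b) :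
    (a + b) ^ p ≤ 2 ^ p * (a ^ p + b ^ p) := by
  rcases le_total a b with h | h
  · calc (a + b) ^ p ≤ (2 * b) ^ p := by
          apply Real.rpow_le_rpow (by linarith) (by linarith) (by linarith)
      _ = 2 ^ p * b ^ p := Real.mul_rpow (by norm_num) hb
      _ ≤ 2 ^ p * (a ^ p + b ^ p) := by
          apply mul_le_mul_of_nonneg_left _ (Real.rpow_nonneg (by norm_num) p)
          nlinarith [Real.rpow_nonneg ha p]
  · calc (a + b) ^ p ≤ (2 * a) ^ p := by
          apply Real.rpow_le_rpow (by linarith) (by linarith) (by linarith)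
      _ = 2 ^ p * a ^ p := Real.mul_rpow (by norm_num) ha
      _ ≤ 2 ^ p * (a ^ p + b ^ p) := by
          apply mul_le_mul_of_nonneg_left _ (Real.rpow_nonneg (by norm_num) p)
          nlinarith [Real.rpow_nonneg hb p]

private lemma sum_rpow (p : ℝ) (hp : 1 ≤ p) (f : ℕ → ℝ) (hf : ∀ i, 0 ≤ f i) :
    ∀ n : ℕ, (∑ i ∈ range n, f i) ^ p ≤ ((2:ℝ) ^ p) ^ n * ∑ i ∈ range n, f i ^ p := by
  have h2 : (1:ℝ) ≤ 2 ^ p := Real.one_le_rpow (by norm_num) (by linarith)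
  intro n
  induction n with
  | zero => simp [Real.zero_rpow (by linarith : p ≠ 0)]
  | succ n ih =>
      have hsum : 0 ≤ ∑ i ∈ range n, f i := Finset.sum_nonneg fun i _ => hf i
      have hsump : 0 ≤ ∑ i ∈ range n, f i ^ p :=
        Finset.sum_nonneg fun i _ => Real.rpow_nonneg (hf i) p
      rw [Finset.sum_range_succ, Finset.sum_range_succ]
      calc (∑ i ∈ range n, f i + f n) ^ p
          ≤ 2 ^ p * ((∑ i ∈ range n, f i) ^ p + f n ^ p) := two_term p hp hsum (hf n)
        _ ≤ 2 ^ p * (((2:ℝ) ^ p) ^ n * ∑ i ∈ range n, f i ^ p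
              + ((2:ℝ) ^ p) ^ n * f n ^ p) := by
            apply mul_le_mul_of_nonneg_left _ (by positivity)
            have h1 := Real.rpow_nonneg (hf n) p
            have hge : (1:ℝ) ≤ ((2:ℝ) ^ p) ^ n := one_le_pow₀ h2
            nlinarith [ih]
        _ = ((2:ℝ) ^ p) ^ (n+1) * (∑ i ∈ range n, f i ^ p + f n ^ p) := by ring
open Finset

private lemma norm_le_sum_abs {n : ℕ} (x : EuclideanSpace ℝ (Fin n)) :
    ‖x‖ ≤ ∑ i, |x i| := by
  rw [EuclideanSpace.norm_eq]
  have h1 : ∑ i, ‖x i‖ ^ 2 ≤ (∑ i, ‖x i‖) ^ 2 :=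
    Finset.sum_sq_le_sq_sum_of_nonneg (fun i _ => norm_nonneg _)
  calc Real.sqrt (∑ i, ‖x i‖ ^ 2) ≤ Real.sqrt ((∑ i, ‖x i‖) ^ 2) := Real.sqrt_le_sqrt h1
    _ = ∑ i, ‖x i‖ := Real.sqrt_sq (Finset.sum_nonneg fun i _ => norm_nonneg _)
    _ = ∑ i, |x i| := by simp [Real.norm_eq_abs]

private lemma coord_bound {d : ℕ} (x : EuclideanSpace ℝ (Fin (d+1))) (j : Fin (d+1)) :
    |x j| ≤ |x 0| + ∑ i : Fin d, |x i.succ - x i.castSucc| := by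
  have key : ∀ j : Fin (d+1),
      |x j| ≤ |x 0| + ∑ i ∈ univ.filter (fun i : Fin d => (i:ℕ) < (j:ℕ)),
        |x i.succ - x i.castSucc| := by
    intro j
    induction j using Fin.induction with
    | zero => simp
    | succ i ih =>
        have hfilter : (univ.filter (fun k : Fin d => (k:ℕ) < ((i.succ : Fin (d+1)):ℕ)))
            = insert i (univ.filter (fun k : Fin d => (k:ℕ) < ((i.castSucc : Fin (d+1)):ℕ))) := by
          ext k
          simp only [Finset.mem_filter, Finset.mem_univ, true_and, Finset.mem_insert, Fin.val_succ,
            Fin.coe_castSucc]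
          constructor
          · intro h
            rcases Nat.lt_succ_iff_lt_or_eq.mp h with h | h
            · exact Or.inr h
            · exact Or.inl (Fin.ext h)
          · rintro (rfl | h)
            · omega
            · omega
        have hnot : i ∉ univ.filter (fun k : Fin d => (k:ℕ) < ((i.castSucc : Fin (d+1)):ℕ)) := by
          simp
        rw [hfilter, Finset.sum_insert hnot]
        have h1 : |x i.succ| ≤ |x i.castSucc| + |x i.succ - x i.castSucc| := by
          have := abs_sub_abs_le_abs_sub (x i.succ) (x i.castSucc)
          linarith [abs_nonneg (x i.succ - x i.castSucc)]
        linarith [ih]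
  calc |x j| ≤ _ := key j
    _ ≤ |x 0| + ∑ i : Fin d, |x i.succ - x i.castSucc| := by
        have := Finset.sum_le_sum_of_subset_of_nonneg
          (Finset.filter_subset (fun i : Fin d => (i:ℕ) < (j:ℕ)) univ)
          (fun i _ _ => abs_nonneg (x i.succ - x i.castSucc))
        linarith


end Helpers

set_option maxHeartbeats 1000000 in
/-- If `a ≥ 0` satisfies `C₁|s|^p − C₂ ≤ a(s)` with `p > 1` and
`f₁, f₂ ∈ C¹([0,T])`, then the thin-rod energy
`E(t,x) = a(x₁ − f₁(t)) + a(f₂(t) − x_d) + Σ a(x_{i+1} − x_i)` satisfies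
`C₃|x|^p − C₄ ≤ E(t,x)` on `[0,T] × ℝ^d` for some `C₃, C₄ > 0`, with `|x|` the
Euclidean norm (here the dimension is `d+1`). -/
theorem stmt9 (d : ℕ) (T : ℝ) (hT : 0 < T)
    (a : ℝ → ℝ) (ha0 : ∀ s, 0 ≤ a s)
    (C₁ C₂ p : ℝ) (hC₁ : 0 < C₁) (hC₂ : 0 < C₂) (hp : 1 < p)
    (hlow : ∀ s, C₁ * |s| ^ p - C₂ ≤ a s)
    (f₁ f₂ f₁' f₂' : ℝ → ℝ)
    (hf₁ : ∀ t ∈ Icc (0:ℝ) T, HasDerivAt f₁ (f₁' t) t)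
    (hf₂ : ∀ t ∈ Icc (0:ℝ) T, HasDerivAt f₂ (f₂' t) t)
    (hf₁c : ContinuousOn f₁' (Icc (0:ℝ) T))
    (hf₂c : ContinuousOn f₂' (Icc (0:ℝ) T)) :
    ∃ C₃ > (0:ℝ), ∃ C₄ > (0:ℝ), ∀ t ∈ Icc (0:ℝ) T,
      ∀ x : EuclideanSpace ℝ (Fin (d+1)),
        C₃ * ‖x‖ ^ p - C₄
          ≤ a (x 0 - f₁ t) + a (f₂ t - x (Fin.last d))
            + ∑ i : Fin d, a (x i.succ - x i.castSucc) := by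
  have hp0 : (0:ℝ) ≤ p := by linarith
  -- bound for f₁ on the compact interval
  have hf₁cont : ContinuousOn f₁ (Icc (0:ℝ) T) :=
    fun t ht => (hf₁ t ht).continuousAt.continuousWithinAt
  obtain ⟨C, hC⟩ := isCompact_Icc.exists_bound_of_continuousOn hf₁cont
  set M : ℝ := max C 0 with hM
  have hM0 : 0 ≤ M := le_max_right _ _
  have hMb : ∀ t ∈ Icc (0:ℝ) T, |f₁ t| ≤ M := fun t ht => by
    have := hC t ht
    rw [Real.norm_eq_abs] at this
    exact this.trans (le_max_left _ _)
  -- constants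
  have hB1 : (1:ℝ) ≤ 2 ^ p := Real.one_le_rpow (by norm_num) hp0
  have hB0 : (0:ℝ) ≤ 2 ^ p := by linarith
  have hE1 : (1:ℝ) ≤ ((2:ℝ) ^ p) ^ d := one_le_pow₀ hB1
  have hA0 : (0:ℝ) < ((d:ℝ) + 1) ^ p := Real.rpow_pos_of_pos (by positivity) p
  set K : ℝ := ((d:ℝ) + 1) ^ p * (2 ^ p * 2 ^ p * ((2:ℝ) ^ p) ^ d) with hK
  have hK0 : 0 < K := by
    have : (0:ℝ) < 2 ^ p * 2 ^ p * ((2:ℝ) ^ p) ^ d := by nlinarith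
    exact mul_pos hA0 this
  refine ⟨C₁ / K, div_pos hC₁ hK0, ((d:ℝ) + 1) * C₂ + C₁ * M ^ p, ?_, ?_⟩
  · have : 0 ≤ C₁ * M ^ p := mul_nonneg hC₁.le (Real.rpow_nonneg hM0 p)
    have : 0 < ((d:ℝ) + 1) * C₂ := by positivity
    linarith
  intro t ht x
  set s₀ : ℝ := x 0 - f₁ t with hs₀
  set D : ℝ := ∑ i : Fin d, |x i.succ - x i.castSucc| with hD
  set Q : ℝ := ∑ i : Fin d, |x i.succ - x i.castSucc| ^ p with hQ
  have hD0 : 0 ≤ D := Finset.sum_nonneg fun i _ => abs_nonneg _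
  have hQ0 : 0 ≤ Q := Finset.sum_nonneg fun i _ => Real.rpow_nonneg (abs_nonneg _) p
  have hs₀p : 0 ≤ |s₀| ^ p := Real.rpow_nonneg (abs_nonneg _) p
  have hMp : 0 ≤ M ^ p := Real.rpow_nonneg hM0 p
  -- step 1 : ‖x‖ ≤ (d+1) * (|s₀| + (M + D))
  have hx0 : |x 0| ≤ |s₀| + M := by
    have h1 : x 0 = s₀ + f₁ t := by rw [hs₀]; ring
    calc |x 0| = |s₀ + f₁ t| := by rw [h1]
      _ ≤ |s₀| + |f₁ t| := abs_add_le _ _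
      _ ≤ |s₀| + M := by linarith [hMb t ht]
  have hnorm : ‖x‖ ≤ ((d:ℝ) + 1) * (|s₀| + (M + D)) := by
    calc ‖x‖ ≤ ∑ j, |x j| := norm_le_sum_abs x
      _ ≤ ∑ _j : Fin (d+1), (|x 0| + D) :=
          Finset.sum_le_sum fun j _ => coord_bound x j
      _ = ((d:ℝ) + 1) * (|x 0| + D) := by
          rw [Finset.sum_const, Finset.card_univ, Fintype.card_fin, nsmul_eq_mul]
          push_cast; ring
      _ ≤ ((d:ℝ) + 1) * (|s₀| + (M + D)) := by
          apply mul_le_mul_of_nonneg_left _ (by positivity)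
          linarith
  -- step 2 : D ^ p ≤ ((2:ℝ)^p)^d * Q
  have hDp : D ^ p ≤ ((2:ℝ) ^ p) ^ d * Q := by
    set F : ℕ → ℝ := fun k =>
      if h : k < d then |x (⟨k, h⟩ : Fin d).succ - x (⟨k, h⟩ : Fin d).castSucc| else 0
      with hF
    have hFnn : ∀ k, 0 ≤ F k := by
      intro k; rw [hF]; dsimp only
      split
      · exact abs_nonneg _
      · exact le_rfl
    have hDF : D = ∑ i ∈ Finset.range d, F i := by
      rw [hD, ← Fin.sum_univ_eq_sum_range F d]
      apply Finset.sum_congr rfl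
      intro i _
      simp only [hF]
      rw [dif_pos i.isLt]
    have hQF : Q = ∑ i ∈ Finset.range d, F i ^ p := by
      rw [hQ, ← Fin.sum_univ_eq_sum_range (fun i => F i ^ p) d]
      apply Finset.sum_congr rfl
      intro i _
      simp only [hF]
      rw [dif_pos i.isLt]
    rw [hDF, hQF]
    exact sum_rpow p hp.le F hFnn d
  -- step 3 : ‖x‖ ^ p ≤ K * (|s₀| ^ p + Q + M ^ p)
  have hxp : ‖x‖ ^ p ≤ K * (|s₀| ^ p + Q + M ^ p) := by
    have h1 : ‖x‖ ^ p ≤ (((d:ℝ) + 1) * (|s₀| + (M + D))) ^ p :=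
      Real.rpow_le_rpow (norm_nonneg x) hnorm hp0
    have h2 : (((d:ℝ) + 1) * (|s₀| + (M + D))) ^ p
        = ((d:ℝ) + 1) ^ p * (|s₀| + (M + D)) ^ p :=
      Real.mul_rpow (by positivity) (by positivity)
    have h3 : (|s₀| + (M + D)) ^ p ≤ 2 ^ p * (|s₀| ^ p + (M + D) ^ p) :=
      two_term p hp.le (abs_nonneg _) (by linarith)
    have h4 : (M + D) ^ p ≤ 2 ^ p * (M ^ p + D ^ p) := two_term p hp.le hM0 hD0
    have hE0 : (0:ℝ) ≤ ((2:ℝ) ^ p) ^ d := by positivity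
    calc ‖x‖ ^ p ≤ ((d:ℝ) + 1) ^ p * (|s₀| + (M + D)) ^ p := by rw [← h2]; exact h1
      _ ≤ ((d:ℝ) + 1) ^ p *
            (2 ^ p * (|s₀| ^ p + 2 ^ p * (M ^ p + ((2:ℝ) ^ p) ^ d * Q))) := by
          apply mul_le_mul_of_nonneg_left _ hA0.le
          have k1 := mul_le_mul_of_nonneg_left h4 hB0
          have k2 := mul_le_mul_of_nonneg_left hDp (mul_nonneg hB0 hB0)
          nlinarith [k1, k2, h3]
      _ ≤ K * (|s₀| ^ p + Q + M ^ p) := by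
          rw [hK, mul_assoc]
          apply mul_le_mul_of_nonneg_left _ hA0.le
          have hBE : (1:ℝ) ≤ 2 ^ p * ((2:ℝ) ^ p) ^ d := by nlinarith [hB1, hE1]
          have e1 : 2 ^ p * |s₀| ^ p ≤ 2 ^ p * (2 ^ p * ((2:ℝ) ^ p) ^ d) * |s₀| ^ p := by
            apply mul_le_mul_of_nonneg_right _ hs₀p
            exact le_mul_of_one_le_right hB0 hBE
          have e2 : 2 ^ p * 2 ^ p * M ^ p ≤ 2 ^ p * 2 ^ p * ((2:ℝ) ^ p) ^ d * M ^ p := by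
            apply mul_le_mul_of_nonneg_right _ hMp
            exact le_mul_of_one_le_right (mul_nonneg hB0 hB0) hE1
          nlinarith [e1, e2]
  -- step 4 : lower bounds from hlow
  have hlow₀ : C₁ * |s₀| ^ p - C₂ ≤ a s₀ := hlow s₀
  have hlowQ : C₁ * Q - (d:ℝ) * C₂ ≤ ∑ i : Fin d, a (x i.succ - x i.castSucc) := by
    have hterm : ∀ i : Fin d, i ∈ Finset.univ →
        C₁ * |x i.succ - x i.castSucc| ^ p - C₂ ≤ a (x i.succ - x i.castSucc) :=
      fun i _ => hlow _
    have h := Finset.sum_le_sum hterm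
    rw [Finset.sum_sub_distrib, ← Finset.mul_sum, Finset.sum_const, Finset.card_univ,
      Fintype.card_fin, nsmul_eq_mul] at h
    rw [hQ]
    exact h
  have hmid : 0 ≤ a (f₂ t - x (Fin.last d)) := ha0 _
  -- conclusion
  have hfin : C₁ / K * ‖x‖ ^ p ≤ C₁ * |s₀| ^ p + C₁ * Q + C₁ * M ^ p := by
    have h1 : C₁ / K * ‖x‖ ^ p ≤ C₁ / K * (K * (|s₀| ^ p + Q + M ^ p)) :=
      mul_le_mul_of_nonneg_left hxp (by positivity)
    have h2 : C₁ / K * (K * (|s₀| ^ p + Q + M ^ p))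
        = C₁ * (|s₀| ^ p + Q + M ^ p) := by
      rw [← mul_assoc, div_mul_cancel₀ _ hK0.ne']
    rw [h2] at h1
    linarith
  linarith
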